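/- Let I, J ⊆ S and let w ∈ W be I-reduced-J. Then W_J ∩ w⁻¹ W_I w = W_{J₁}, where J₁ := {u ∈ J : w u w⁻¹ ∈ W_I}. -/

import Mathlib

open scoped Classical

namespace DGM

variable {S : Type*} {W : Type*} [Group W] {M : CoxeterMatrix S}

/-- The standard parabolic subgroup `W_I` of `W`, generated by the simple
reflections indexed by `I ⊆ S`. -/
def WP (cs : CoxeterSystem M W) (I : Set S) : Subgroup W :=
  Subgroup.closure (cs.simple '' I)

/-- `w` is `I`-reduced: `ℓ(sw) > ℓ(w)` for every `s ∈ I`. -/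
def IsLeftReduced (cs : CoxeterSystem M W) (I : Set S) (w : W) : Prop :=
  ∀ s ∈ I, cs.length w < cs.length (cs.simple s * w)

/-- `w` is reduced-`J`: `ℓ(ws) > ℓ(w)` for every `s ∈ J`. -/
def IsRightReduced (cs : CoxeterSystem M W) (J : Set S) (w : W) : Prop :=
  ∀ s ∈ J, cs.length w < cs.length (w * cs.simple s)

/-! ### The sign representation on reflections, and the strong exchange property -/

section Machinery

open CoxeterSystem List

variable (cs : CoxeterSystem M W)

/-- Indicator in `ZMod 2`. -/
noncomputable def chi (a t : W) : ZMod 2 := if t = a then 1 else 0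

lemma chi_conj (a x t y : W) : chi a (x * t * y) = chi (x⁻¹ * a * y⁻¹) t := by
  unfold chi
  congr 1
  simp only [eq_iff_iff]
  constructor
  · rintro rfl; group
  · rintro rfl; group

/-- Count mod two of occurrences of `t` in a list. -/
noncomputable def cnt (t : W) : List W → ZMod 2
  | [] => 0
  | u :: l => chi u t + cnt t l

lemma cnt_eq_zero_of_not_mem {t : W} : ∀ {l : List W}, t ∉ l → cnt t l = 0
  | [], _ => rfl
  | u :: l, h => by
    have h1 : t ≠ u := fun hh => h (hh ▸ (List.mem_cons_self : u ∈ u :: l))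
    have h2 : t ∉ l := fun hh => h (List.mem_cons_of_mem u hh)
    simp [cnt, chi, h1, cnt_eq_zero_of_not_mem h2]

lemma mem_of_cnt_eq_one {t : W} {l : List W} (h : cnt t l = 1) : t ∈ l := by
  by_contra hc
  rw [cnt_eq_zero_of_not_mem hc] at h
  exact absurd h (by decide)

/-- The basic involutions of the sign representation. -/
noncomputable def sgn (i : S) : Function.End (W × ZMod 2) :=
  fun p => (cs.simple i * p.1 * cs.simple i, p.2 + chi (cs.simple i) p.1)

lemma sgn_apply (i : S) (t : W) (ε : ZMod 2) :
    sgn cs i (t, ε) = (cs.simple i * t * cs.simple i, ε + chi (cs.simple i) t) := rfl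

lemma zmod2_add_self (a : ZMod 2) : a + a = 0 := by revert a; decide

lemma zmod2_eq_of_add_eq_zero {a b : ZMod 2} (h : a + b = 0) : a = b := by
  revert a b; decide

private lemma conj_pow_succ {G : Type*} [Group G] (p t : G) (k : ℕ) :
    p ^ k * (p * t * p⁻¹) * (p ^ k)⁻¹ = p ^ (k + 1) * t * (p ^ (k + 1))⁻¹ := by
  rw [pow_succ]
  group

private lemma conj_shift {G : Type*} [Group G] (p q : G) (hpq : p⁻¹ * q = q * p) (a : ℕ) :
    p⁻¹ * (q * p ^ a) * (p⁻¹)⁻¹ = q * p ^ (a + 2) := by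
  rw [inv_inv]
  calc p⁻¹ * (q * p ^ a) * p = (p⁻¹ * q) * (p ^ a * p) := by group
    _ = q * (p * (p ^ a * p)) := by rw [hpq]; group
    _ = q * p ^ (a + 1 + 1) := by group

private lemma sgn_pow_formula (i i' : S) (k : ℕ) (t : W) (ε : ZMod 2) :
    ((sgn cs i * sgn cs i') ^ k) (t, ε) =
      ((cs.simple i * cs.simple i') ^ k * t * ((cs.simple i * cs.simple i') ^ k)⁻¹,
        ε + ∑ a ∈ Finset.range (2 * k),
          chi (cs.simple i' * (cs.simple i * cs.simple i') ^ a) t) := by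
  have happ : ∀ (f g : Function.End (W × ZMod 2)) (x : W × ZMod 2),
      (f * g) x = f (g x) := fun _ _ _ => rfl
  induction k generalizing t ε with
  | zero =>
    rw [pow_zero, pow_zero]
    have h1 : (1 : Function.End (W × ZMod 2)) (t, ε) = (t, ε) := rfl
    rw [h1]
    simp
  | succ k ih =>
    have hstep : (sgn cs i * sgn cs i') (t, ε) =
        ((cs.simple i * cs.simple i') * t * (cs.simple i * cs.simple i')⁻¹,
          ε + (chi (cs.simple i') t
            + chi (cs.simple i' * (cs.simple i * cs.simple i')) t)) := by
      rw [happ, sgn_apply, sgn_apply]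
      have h1 : cs.simple i * (cs.simple i' * t * cs.simple i') * cs.simple i
          = (cs.simple i * cs.simple i') * t * (cs.simple i * cs.simple i')⁻¹ := by
        rw [mul_inv_rev, cs.inv_simple, cs.inv_simple]; group
      have h2 : chi (cs.simple i) (cs.simple i' * t * cs.simple i')
          = chi (cs.simple i' * (cs.simple i * cs.simple i')) t := by
        rw [chi_conj]
        simp only [cs.inv_simple]
        congr 1
        rw [mul_assoc]
      rw [h1, h2]
      exact Prod.ext_iff.mpr ⟨rfl, by ring⟩
    rw [pow_succ, happ, hstep, ih]
    simp only [Prod.mk.injEq]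
    constructor
    · exact conj_pow_succ _ t k
    · have hps : (cs.simple i * cs.simple i')⁻¹ * cs.simple i'
          = cs.simple i' * (cs.simple i * cs.simple i') := by
        rw [mul_inv_rev, cs.inv_simple, cs.inv_simple]
        group
      have hshift : ∀ a : ℕ,
          chi (cs.simple i' * (cs.simple i * cs.simple i') ^ a)
            ((cs.simple i * cs.simple i') * t * (cs.simple i * cs.simple i')⁻¹)
          = chi (cs.simple i' * (cs.simple i * cs.simple i') ^ (a + 1 + 1)) t := by
        intro a
        rw [chi_conj]
        congr 1
        exact conj_shift _ _ hps a
      rw [Finset.sum_congr rfl fun a _ => hshift a]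
      have h2k : 2 * (k + 1) = (2 * k + 1) + 1 := by ring
      rw [h2k, Finset.sum_range_succ', Finset.sum_range_succ']
      simp only [pow_zero, mul_one, pow_one, zero_add]
      ring

lemma sgn_liftable : M.IsLiftable (sgn cs) := by
  intro i i'
  set m := M i i' with hm
  have hpm : (cs.simple i * cs.simple i') ^ m = 1 := cs.simple_mul_simple_pow i i'
  funext x
  obtain ⟨t, ε⟩ := x
  rw [sgn_pow_formula cs i i' m t ε, hpm]
  have hsum : ∑ a ∈ Finset.range (2 * m),
      chi (cs.simple i' * (cs.simple i * cs.simple i') ^ a) t = 0 := by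
    rw [two_mul, Finset.sum_range_add]
    have : ∀ a : ℕ, chi (cs.simple i' * (cs.simple i * cs.simple i') ^ (m + a)) t
        = chi (cs.simple i' * (cs.simple i * cs.simple i') ^ a) t := by
      intro a
      congr 2
      rw [pow_add, hpm, one_mul]
    rw [Finset.sum_congr rfl fun a _ => this a]
    exact zmod2_add_self _
  rw [hsum]
  have h1 : (1 : Function.End (W × ZMod 2)) (t, ε) = (t, ε) := rfl
  rw [h1]
  simp

/-- The sign representation `W →* End (W × ZMod 2)`. -/
noncomputable def phi : W →* Function.End (W × ZMod 2) :=
  cs.lift ⟨sgn cs, sgn_liftable cs⟩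

lemma phi_simple (i : S) : phi cs (cs.simple i) = sgn cs i :=
  cs.lift_apply_simple (sgn_liftable cs) i

lemma phi_wordProd (ω : List S) (t : W) (ε : ZMod 2) :
    phi cs (cs.wordProd ω) (t, ε) =
      (cs.wordProd ω * t * (cs.wordProd ω)⁻¹, ε + cnt t (cs.rightInvSeq ω)) := by
  induction ω generalizing ε with
  | nil =>
    rw [cs.wordProd_nil, map_one]
    have h1 : (1 : Function.End (W × ZMod 2)) (t, ε) = (t, ε) := rfl
    rw [h1]
    show (t, ε) = (1 * t * 1⁻¹, ε + cnt t [])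
    simp [cnt]
  | cons i ω ih =>
    have happ : ∀ (f g : Function.End (W × ZMod 2)) (x : W × ZMod 2),
        (f * g) x = f (g x) := fun _ _ _ => rfl
    rw [cs.wordProd_cons, map_mul, happ, ih, phi_simple, sgn_apply]
    have hris : cs.rightInvSeq (i :: ω) =
        (cs.wordProd ω)⁻¹ * cs.simple i * cs.wordProd ω :: cs.rightInvSeq ω := rfl
    rw [hris]
    simp only [Prod.mk.injEq]
    constructor
    · rw [mul_inv_rev, cs.inv_simple]; group
    · show ε + cnt t (cs.rightInvSeq ω)
          + chi (cs.simple i) (cs.wordProd ω * t * (cs.wordProd ω)⁻¹)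
        = ε + (chi ((cs.wordProd ω)⁻¹ * cs.simple i * cs.wordProd ω) t
            + cnt t (cs.rightInvSeq ω))
      rw [chi_conj]
      have : ((cs.wordProd ω)⁻¹)⁻¹ = cs.wordProd ω := inv_inv _
      rw [this]
      ring

/-- The "parity of reflection occurrences" function. -/
noncomputable def nn (w t : W) : ZMod 2 := (phi cs w (t, 0)).2

lemma nn_wordProd (ω : List S) (t : W) : nn cs (cs.wordProd ω) t = cnt t (cs.rightInvSeq ω) := by
  unfold nn
  rw [phi_wordProd, zero_add]

lemma phi_apply (w t : W) (ε : ZMod 2) :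
    phi cs w (t, ε) = (w * t * w⁻¹, ε + nn cs w t) := by
  obtain ⟨ω, rfl⟩ := cs.wordProd_surjective w
  rw [phi_wordProd, nn_wordProd]

lemma nn_mul (w₁ w₂ t : W) : nn cs (w₁ * w₂) t = nn cs w₂ t + nn cs w₁ (w₂ * t * w₂⁻¹) := by
  have : (phi cs (w₁ * w₂)) (t, 0) = phi cs w₁ (phi cs w₂ (t, 0)) := by
    rw [map_mul]; rfl
  unfold nn
  rw [this, phi_apply, phi_apply, phi_apply]
  simp

lemma nn_one (t : W) : nn cs 1 t = 0 := by
  unfold nn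
  rw [map_one]
  rfl

lemma nn_simple (i : S) (t : W) : nn cs (cs.simple i) t = chi (cs.simple i) t := by
  unfold nn
  rw [phi_simple, sgn_apply, zero_add]

lemma nn_inv (w t : W) : nn cs w⁻¹ t = nn cs w (w⁻¹ * t * w) := by
  have h := nn_mul cs w w⁻¹ t
  rw [mul_inv_cancel, nn_one, inv_inv] at h
  exact zmod2_eq_of_add_eq_zero h.symm

lemma nn_reflection {t : W} (ht : cs.IsReflection t) : nn cs t t = 1 := by
  obtain ⟨v, b, rfl⟩ := ht
  set t := v * cs.simple b * v⁻¹ with hdef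
  have h1 : t = v * (cs.simple b * v⁻¹) := by rw [hdef]; group
  have h2 : nn cs t t = nn cs (cs.simple b * v⁻¹) t
      + nn cs v ((cs.simple b * v⁻¹) * t * (cs.simple b * v⁻¹)⁻¹) := by
    nth_rw 1 [h1]
    exact nn_mul cs v (cs.simple b * v⁻¹) t
  have hc1 : (cs.simple b * v⁻¹) * t * (cs.simple b * v⁻¹)⁻¹ = cs.simple b := by
    rw [hdef]
    group
  have h3 : nn cs (cs.simple b * v⁻¹) t = nn cs v⁻¹ t + nn cs (cs.simple b) (v⁻¹ * t * v) := by
    have := nn_mul cs (cs.simple b) v⁻¹ t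
    rw [inv_inv] at this
    exact this
  have hc2 : v⁻¹ * t * v = cs.simple b := by rw [hdef]; group
  have h4 : nn cs (cs.simple b) (v⁻¹ * t * v) = 1 := by
    rw [hc2, nn_simple, chi]
    simp
  have h5 : nn cs v⁻¹ t = nn cs v (cs.simple b) := by rw [nn_inv, hc2]
  rw [h2, hc1, h3, h4, h5]
  have := zmod2_add_self (nn cs v (cs.simple b))
  calc nn cs v (cs.simple b) + 1 + nn cs v (cs.simple b)
      = nn cs v (cs.simple b) + nn cs v (cs.simple b) + 1 := by ring
    _ = 1 := by rw [this, zero_add]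

lemma nn_mul_reflection (w : W) {t : W} (ht : cs.IsReflection t) :
    nn cs (w * t) t = 1 + nn cs w t := by
  rw [nn_mul]
  have : t * t * t⁻¹ = t := by
    rw [ht.inv, ht.mul_self, one_mul]
  rw [this, nn_reflection cs ht]

lemma mem_rightInvSeq_of_lt {ω : List S} (hω : cs.IsReduced ω) {t : W}
    (ht : cs.IsReflection t) (h : cs.length (cs.wordProd ω * t) < cs.length (cs.wordProd ω)) :
    t ∈ cs.rightInvSeq ω := by
  have hzmod : ∀ a : ZMod 2, a = 0 ∨ a = 1 := by decide
  rcases hzmod (nn cs (cs.wordProd ω) t) with h0 | h1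
  · exfalso
    have hwt : nn cs (cs.wordProd ω * t) t = 1 := by
      rw [nn_mul_reflection cs _ ht, h0, add_zero]
    obtain ⟨ρ, hρred, hρ⟩ := cs.exists_reduced_word' (cs.wordProd ω * t)
    rw [hρ] at hwt
    rw [nn_wordProd] at hwt
    have hmem : t ∈ cs.rightInvSeq ρ := mem_of_cnt_eq_one hwt
    have hinv := cs.isRightInversion_of_mem_rightInvSeq hρred hmem
    have : cs.length (cs.wordProd ρ * t) < cs.length (cs.wordProd ρ) := hinv.2
    rw [← hρ] at this
    rw [mul_assoc, ht.mul_self, mul_one] at this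
    omega
  · rw [nn_wordProd] at h1
    exact mem_of_cnt_eq_one h1

/-- The (weak right) exchange property. -/
lemma exchange {ω : List S} (hω : cs.IsReduced ω) {i : S}
    (h : cs.length (cs.wordProd ω * cs.simple i) < cs.length (cs.wordProd ω)) :
    ∃ j < ω.length, cs.wordProd ω * cs.simple i = cs.wordProd (ω.eraseIdx j) := by
  have hmem : cs.simple i ∈ cs.rightInvSeq ω :=
    mem_rightInvSeq_of_lt cs hω (cs.isReflection_simple i) h
  obtain ⟨j, hj, hget⟩ := List.mem_iff_getElem.mp hmem
  rw [cs.length_rightInvSeq] at hj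
  refine ⟨j, hj, ?_⟩
  have := cs.wordProd_mul_getD_rightInvSeq ω j
  rw [List.getD_eq_getElem _ 1 (by rw [cs.length_rightInvSeq]; exact hj), hget] at this
  exact this

/-! ### Words for elements of standard parabolic subgroups -/

lemma simple_mem_WP {J : Set S} {u : S} (hu : u ∈ J) : cs.simple u ∈ WP cs J :=
  Subgroup.subset_closure ⟨u, hu, rfl⟩

lemma wordProd_mem_WP {J : Set S} {ω : List S} (h : ∀ i ∈ ω, i ∈ J) :
    cs.wordProd ω ∈ WP cs J := by
  induction ω with
  | nil => rw [cs.wordProd_nil]; exact one_mem _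
  | cons i ω ih =>
    rw [cs.wordProd_cons]
    exact mul_mem (simple_mem_WP cs (h i (List.mem_cons_self : i ∈ i :: ω)))
      (ih fun j hj => h j (List.mem_cons_of_mem i hj))

lemma exists_word_of_mem_WP {J : Set S} {x : W} (hx : x ∈ WP cs J) :
    ∃ ω : List S, (∀ i ∈ ω, i ∈ J) ∧ x = cs.wordProd ω := by
  induction hx using Subgroup.closure_induction with
  | mem x hx =>
    obtain ⟨u, hu, rfl⟩ := hx
    exact ⟨[u], by simpa using hu, by rw [cs.wordProd_singleton]⟩
  | one => exact ⟨[], by simp, by rw [cs.wordProd_nil]⟩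
  | mul x y _ _ ihx ihy =>
    obtain ⟨ω₁, h₁, rfl⟩ := ihx
    obtain ⟨ω₂, h₂, rfl⟩ := ihy
    exact ⟨ω₁ ++ ω₂, fun i hi => (List.mem_append.mp hi).elim (h₁ i) (h₂ i),
      by rw [cs.wordProd_append]⟩
  | inv x _ ihx =>
    obtain ⟨ω, h, rfl⟩ := ihx
    exact ⟨ω.reverse, fun i hi => h i (List.mem_reverse.mp hi),
      by rw [cs.wordProd_reverse]⟩

/-- Any word can be shortened to a reduced word using only its own letters. -/
lemma reduce_word : ∀ (n : ℕ) (ω : List S), ω.length ≤ n →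
    ∃ γ : List S, (∀ i ∈ γ, i ∈ ω) ∧ cs.wordProd γ = cs.wordProd ω ∧ cs.IsReduced γ := by
  intro n
  induction n with
  | zero =>
    intro ω hω
    have : ω = [] := List.eq_nil_of_length_eq_zero (Nat.le_zero.mp hω)
    subst this
    exact ⟨[], by simp, rfl, by simp [CoxeterSystem.IsReduced]⟩
  | succ n ih =>
    intro ω hω
    by_cases hred : cs.IsReduced ω
    · exact ⟨ω, fun _ h => h, rfl, hred⟩
    · have hbad : ¬ cs.IsReduced (ω.take ω.length) := by rwa [List.take_length]
      have hex : ∃ j, ¬ cs.IsReduced (ω.take j) := ⟨ω.length, hbad⟩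
      have hfne : Nat.find hex ≠ 0 := by
        intro h0
        have hthis := Nat.find_spec hex
        rw [h0] at hthis
        exact hthis (by simp [CoxeterSystem.IsReduced])
      obtain ⟨j, hjfind⟩ : ∃ j, Nat.find hex = j + 1 := ⟨Nat.find hex - 1, by omega⟩
      have hj₀spec : ¬ cs.IsReduced (ω.take (j + 1)) := by
        rw [← hjfind]; exact Nat.find_spec hex
      have hj₀le : j + 1 ≤ ω.length := by
        rw [← hjfind]; exact Nat.find_min' hex hbad
      have hjred : cs.IsReduced (ω.take j) :=
        not_not.mp (Nat.find_min hex (by omega))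
      have hjlt : j < ω.length := by omega
      have htake : ω.take (j + 1) = (ω.take j).concat (ω[j]'hjlt) :=
        (List.take_concat_get hjlt).symm
      set c := ω[j]'hjlt with hc
      have hlentake : (ω.take j).length = j := by
        rw [List.length_take]; omega
      have hltake : cs.length (cs.wordProd (ω.take j)) = j := hjred.trans hlentake
      have hπ : cs.wordProd (ω.take (j + 1)) = cs.wordProd (ω.take j) * cs.simple c := by
        rw [htake, cs.wordProd_concat]
      have hdec : cs.length (cs.wordProd (ω.take j) * cs.simple c)
          < cs.length (cs.wordProd (ω.take j)) := by
        rcases cs.length_mul_simple (cs.wordProd (ω.take j)) c with hup | hdn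
        · exfalso
          apply hj₀spec
          show cs.length (cs.wordProd (ω.take (j + 1))) = (ω.take (j + 1)).length
          rw [hπ, hup, hltake, List.length_take]
          omega
        · omega
      obtain ⟨k, hk, hkeq⟩ := exchange cs hjred hdec
      rw [hlentake] at hk
      set γ₀ : List S := (ω.take j).eraseIdx k ++ ω.drop (j + 1) with hγ₀
      have hπγ₀ : cs.wordProd γ₀ = cs.wordProd ω := by
        conv_rhs => rw [← List.take_append_drop (j + 1) ω]
        rw [hγ₀, cs.wordProd_append, cs.wordProd_append, ← hkeq, ← hπ]
      have hkj : k < (ω.take j).length := by rw [hlentake]; exact hk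
      have hererase : ((ω.take j).eraseIdx k).length + 1 = (ω.take j).length :=
        List.length_eraseIdx_add_one hkj
      have hlenγ₀ : γ₀.length ≤ n := by
        rw [hγ₀, List.length_append, List.length_drop]
        rw [hlentake] at hererase
        omega
      have hsub : ∀ i ∈ γ₀, i ∈ ω := by
        intro i hi
        rcases List.mem_append.mp hi with h' | h'
        · exact (List.take_sublist j ω).subset ((List.eraseIdx_sublist _ k).subset h')
        · exact (List.drop_sublist (j + 1) ω).subset h'
      obtain ⟨γ, hγmem, hγprod, hγred⟩ := ih γ₀ hlenγ₀
      exact ⟨γ, fun i hi => hsub i (hγmem i hi), by rw [hγprod, hπγ₀], hγred⟩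

lemma exists_reduced_word_of_mem_WP {J : Set S} {x : W} (hx : x ∈ WP cs J) :
    ∃ ω : List S, (∀ i ∈ ω, i ∈ J) ∧ cs.IsReduced ω ∧ x = cs.wordProd ω := by
  obtain ⟨ω, hωJ, rfl⟩ := exists_word_of_mem_WP cs hx
  obtain ⟨γ, hγmem, hγprod, hγred⟩ := reduce_word cs ω.length ω le_rfl
  exact ⟨γ, fun i hi => hωJ i (hγmem i hi), hγred, hγprod.symm⟩

/-! ### Length additivity for reduced coset representatives -/

lemma length_mul_of_min {J : Set S} {w : W}
    (hmin : ∀ x ∈ WP cs J, cs.length w ≤ cs.length (w * x)) :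
    ∀ x ∈ WP cs J, cs.length (w * x) = cs.length w + cs.length x := by
  have key : ∀ n : ℕ, ∀ x ∈ WP cs J, cs.length x ≤ n →
      cs.length (w * x) = cs.length w + cs.length x := by
    intro n
    induction n with
    | zero =>
      intro x hx hlen
      have : x = 1 := cs.length_eq_zero_iff.mp (Nat.le_zero.mp hlen)
      subst this
      simp
    | succ n ih =>
      intro x hx hlen
      rcases Nat.lt_or_ge (cs.length x) (n + 1) with hlt | hge
      · exact ih x hx (by omega)
      · have hx1 : x ≠ 1 := by
          intro h; rw [h, cs.length_one] at hge; omega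
        obtain ⟨β, hβJ, hβred, rfl⟩ := exists_reduced_word_of_mem_WP cs hx
        have hβne : β ≠ [] := by
          intro h; rw [h, cs.wordProd_nil] at hx1; exact hx1 rfl
        set δ := β.dropLast with hδ
        set u := β.getLast hβne with hu
        have hsplit : δ ++ [u] = β := List.dropLast_append_getLast hβne
        have hδred : cs.IsReduced δ := by
          rw [hδ, List.dropLast_eq_take]
          exact hβred.take _
        have hxprod : cs.wordProd β = cs.wordProd δ * cs.simple u := by
          rw [← hsplit, cs.wordProd_append, cs.wordProd_singleton]
        have hδJ : ∀ i ∈ δ, i ∈ J := fun i hi =>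
          hβJ i ((List.dropLast_sublist β).subset hi)
        have hδmem : cs.wordProd δ ∈ WP cs J := wordProd_mem_WP cs hδJ
        have hlenδ : cs.length (cs.wordProd δ) + 1 = cs.length (cs.wordProd β) := by
          rw [hδred, hβred, hδ, List.length_dropLast]
          have : β.length ≠ 0 := fun h => hβne (List.eq_nil_of_length_eq_zero h)
          omega
        have ihδ : cs.length (w * cs.wordProd δ)
            = cs.length w + cs.length (cs.wordProd δ) := ih _ hδmem (by omega)
        have hlenδ' : cs.length (cs.wordProd δ) + 1
            = cs.length (cs.wordProd δ * cs.simple u) := by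
          rw [← hxprod]; exact hlenδ
        rcases cs.length_mul_simple (w * cs.wordProd δ) u with hup | hdn
        · rw [hxprod, ← mul_assoc, hup, ihδ]
          omega
        · exfalso
          -- use the exchange property to contradict minimality
          obtain ⟨α, hαlen, hαw⟩ := cs.exists_reduced_word w
          replace hαlen : α.length = cs.length w := by rw [hαw]; exact hαlen.symm
          have hαδred : cs.IsReduced (α ++ δ) := by
            unfold CoxeterSystem.IsReduced
            rw [cs.wordProd_append, ← hαw, List.length_append, hαlen, ihδ, hδred]
          have hαδprod : cs.wordProd (α ++ δ) = w * cs.wordProd δ := by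
            rw [cs.wordProd_append, ← hαw]
          have hdec : cs.length (cs.wordProd (α ++ δ) * cs.simple u)
              < cs.length (cs.wordProd (α ++ δ)) := by
            rw [hαδprod]; omega
          obtain ⟨j, hj, hjeq⟩ := exchange cs hαδred hdec
          rw [hαδprod] at hjeq
          rcases Nat.lt_or_ge j α.length with hjα | hjα
          · -- erased within α : contradicts minimality of w in its coset
            rw [List.eraseIdx_append_of_lt_length hjα] at hjeq
            rw [cs.wordProd_append] at hjeq
            have hlv : cs.length (cs.wordProd (α.eraseIdx j)) + 1 ≤ α.length := by
              have h1 := cs.length_wordProd_le (α.eraseIdx j)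
              have h2 := List.length_eraseIdx_add_one hjα
              omega
            have hwx' : w * (cs.wordProd δ * cs.simple u * (cs.wordProd δ)⁻¹)
                = cs.wordProd (α.eraseIdx j) := by
              rw [← mul_assoc, ← mul_assoc, hjeq]
              group
            have hmem' : cs.wordProd δ * cs.simple u * (cs.wordProd δ)⁻¹ ∈ WP cs J := by
              refine mul_mem (mul_mem hδmem ?_) (inv_mem hδmem)
              exact simple_mem_WP cs (hβJ u (by rw [hu]; exact List.getLast_mem hβne))
            have hge := hmin _ hmem'
            rw [hwx'] at hge
            omega
          · -- erased within δ : the word β was not reduced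
            rw [List.eraseIdx_append_of_length_le hjα, cs.wordProd_append, ← hαw] at hjeq
            have hcancel : cs.wordProd δ * cs.simple u
                = cs.wordProd (δ.eraseIdx (j - α.length)) := by
              apply mul_left_cancel (a := w)
              rw [← mul_assoc]
              exact hjeq
            have hlen2 : cs.length (cs.wordProd δ * cs.simple u)
                ≤ δ.length - 1 := by
              rw [hcancel]
              have h1 := cs.length_wordProd_le (δ.eraseIdx (j - α.length))
              have h2 : j - α.length < δ.length := by
                rw [List.length_append] at hj
                omega
              have := List.length_eraseIdx_add_one h2
              omega
            rw [← hxprod] at hlen2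
            have hβlen : δ.length + 1 = β.length := by
              rw [hδ, List.length_dropLast]
              have : β.length ≠ 0 := fun h => hβne (List.eq_nil_of_length_eq_zero h)
              omega
            rw [hβred] at hlen2
            omega
  intro x hx
  exact key (cs.length x) x hx le_rfl

lemma min_of_rightReduced {J : Set S} {w : W} (h2 : IsRightReduced cs J w) :
    ∀ x ∈ WP cs J, cs.length w ≤ cs.length (w * x) := by
  have hex : ∃ n : ℕ, ∃ x ∈ WP cs J, cs.length (w * x) = n :=
    ⟨cs.length (w * 1), 1, one_mem _, rfl⟩
  set n₀ := Nat.find hex with hn₀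
  obtain ⟨x₀, hx₀mem, hx₀⟩ := Nat.find_spec hex
  set v := w * x₀ with hv
  have hminv : ∀ x ∈ WP cs J, cs.length v ≤ cs.length (v * x) := by
    intro x hxmem
    have : cs.length (v * x) ∈ {n : ℕ | ∃ x ∈ WP cs J, cs.length (w * x) = n} := by
      refine ⟨x₀ * x, mul_mem hx₀mem hxmem, ?_⟩
      rw [hv, mul_assoc]
    rw [hx₀]
    exact Nat.find_min' hex this
  have hlenv := length_mul_of_min cs hminv
  have hx₀inv : x₀⁻¹ ∈ WP cs J := inv_mem hx₀mem
  by_cases hx₀1 : x₀ = 1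
  · subst hx₀1
    intro x hxmem
    have hthis := hminv x hxmem
    rw [hv, mul_one] at hthis
    exact hthis
  · exfalso
    obtain ⟨β, hβJ, hβred, hβprod⟩ := exists_reduced_word_of_mem_WP cs hx₀inv
    have hβne : β ≠ [] := by
      intro h
      rw [h, cs.wordProd_nil] at hβprod
      exact hx₀1 (by rw [← inv_inv x₀, hβprod, inv_one])
    set δ := β.dropLast with hδ
    set u := β.getLast hβne with hu
    have hsplit : δ ++ [u] = β := List.dropLast_append_getLast hβne
    have huJ : u ∈ J := hβJ u (by rw [hu]; exact List.getLast_mem hβne)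
    have hδJ : ∀ i ∈ δ, i ∈ J := fun i hi => hβJ i ((List.dropLast_sublist β).subset hi)
    have hδmem : cs.wordProd δ ∈ WP cs J := wordProd_mem_WP cs hδJ
    have hβsplit : x₀⁻¹ = cs.wordProd δ * cs.simple u := by
      rw [hβprod, ← hsplit, cs.wordProd_append, cs.wordProd_singleton]
    have hw_eq : w = v * x₀⁻¹ := by rw [hv]; group
    have hx₀eq : x₀ = (cs.wordProd δ * cs.simple u)⁻¹ := by
      rw [← hβsplit, inv_inv]
    have hwsu : w * cs.simple u = v * cs.wordProd δ := by
      rw [hv, hx₀eq, mul_inv_rev, cs.inv_simple]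
      group
    have hℓw : cs.length w = cs.length v + cs.length x₀⁻¹ := by
      rw [hw_eq, hlenv _ hx₀inv]
    have hℓδ : cs.length (cs.wordProd δ) + 1 = cs.length x₀⁻¹ := by
      rw [hβprod, hβred]
      have hδred : cs.IsReduced δ := by
        rw [hδ, List.dropLast_eq_take]; exact hβred.take _
      rw [hδred, hδ, List.length_dropLast]
      have : β.length ≠ 0 := fun h => hβne (List.eq_nil_of_length_eq_zero h)
      omega
    have hℓwsu : cs.length (w * cs.simple u) = cs.length v + cs.length (cs.wordProd δ) := by
      rw [hwsu, hlenv _ hδmem]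
    have := h2 u huJ
    omega

lemma length_mul_of_rightReduced {J : Set S} {w : W} (h2 : IsRightReduced cs J w)
    {x : W} (hx : x ∈ WP cs J) : cs.length (w * x) = cs.length w + cs.length x :=
  length_mul_of_min cs (min_of_rightReduced cs h2) x hx

lemma length_mul_of_leftReduced {I : Set S} {w : W} (h1 : IsLeftReduced cs I w)
    {y : W} (hy : y ∈ WP cs I) : cs.length (y * w) = cs.length y + cs.length w := by
  have h2' : IsRightReduced cs I w⁻¹ := by
    intro t ht
    have heq : cs.length (w⁻¹ * cs.simple t) = cs.length (cs.simple t * w) := by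
      rw [← cs.length_inv, mul_inv_rev, inv_inv, cs.inv_simple]
    rw [heq, cs.length_inv]
    exact h1 t ht
  have hyinv : y⁻¹ ∈ WP cs I := inv_mem hy
  have hcalc := length_mul_of_rightReduced cs h2' hyinv
  have hinv2 : (y * w)⁻¹ = w⁻¹ * y⁻¹ := by rw [mul_inv_rev]
  rw [← cs.length_inv (y * w), hinv2, hcalc, cs.length_inv, cs.length_inv]
  omega

end Machinery

/-- (Solomon)  If `w` is `I`-reduced-`J`, then `W_J ∩ w⁻¹ W_I w = W_{J₁}` where
`J₁ := {u ∈ J : w u w⁻¹ ∈ W_I}`. -/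
theorem solomon (cs : CoxeterSystem M W) (I J : Set S) (w : W)
    (h1 : IsLeftReduced cs I w) (h2 : IsRightReduced cs J w) :
    WP cs J ⊓ (WP cs I).map (MulAut.conj w⁻¹).toMonoidHom
      = WP cs {u | u ∈ J ∧ w * cs.simple u * w⁻¹ ∈ WP cs I} := by
  set J₁ : Set S := {u | u ∈ J ∧ w * cs.simple u * w⁻¹ ∈ WP cs I} with hJ₁
  apply le_antisymm
  · -- hard direction
    intro x hx
    obtain ⟨hxJ, y, hyI, hyx⟩ := hx
    have hxy : w * x * w⁻¹ ∈ WP cs I := by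
      have : x = w⁻¹ * y * w := by
        rw [← hyx]
        simp [MulAut.conj_apply]
      rw [this]
      have : w * (w⁻¹ * y * w) * w⁻¹ = y := by group
      rw [this]
      exact hyI
    clear hyx hyI y
    have key : ∀ n : ℕ, ∀ x : W, x ∈ WP cs J → w * x * w⁻¹ ∈ WP cs I →
        cs.length x ≤ n → x ∈ WP cs J₁ := by
      intro n
      induction n with
      | zero =>
        intro x hxJ _ hlen
        have : x = 1 := cs.length_eq_zero_iff.mp (Nat.le_zero.mp hlen)
        rw [this]
        exact one_mem _
      | succ n ih =>
        intro x hxJ hxI hlen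
        rcases Nat.lt_or_ge (cs.length x) (n + 1) with hlt | hge
        · exact ih x hxJ hxI (by omega)
        · have hx1 : x ≠ 1 := by
            intro h; rw [h, cs.length_one] at hge; omega
          obtain ⟨β, hβJ, hβred, rfl⟩ := exists_reduced_word_of_mem_WP cs hxJ
          have hβne : β ≠ [] := by
            intro h; rw [h, cs.wordProd_nil] at hx1; exact hx1 rfl
          set x := cs.wordProd β with hxdef
          set δ := β.dropLast with hδ
          set u := β.getLast hβne with hu
          have hsplit : δ ++ [u] = β := List.dropLast_append_getLast hβne
          have huJ : u ∈ J := hβJ u (by rw [hu]; exact List.getLast_mem hβne)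
          have hδJ : ∀ i ∈ δ, i ∈ J := fun i hi => hβJ i ((List.dropLast_sublist β).subset hi)
          set x' := cs.wordProd δ with hx'
          have hx'mem : x' ∈ WP cs J := wordProd_mem_WP cs hδJ
          have hδred : cs.IsReduced δ := by
            rw [hδ, List.dropLast_eq_take]; exact hβred.take _
          have hxsplit : x = x' * cs.simple u := by
            rw [hxdef, ← hsplit, cs.wordProd_append, cs.wordProd_singleton]
          have hℓx' : cs.length x' + 1 = cs.length x := by
            rw [hxdef, hβred, hx', hδred, hδ, List.length_dropLast]
            have : β.length ≠ 0 := fun h => hβne (List.eq_nil_of_length_eq_zero h)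
            omega
          set y := w * x * w⁻¹ with hy
          have hyw : y * w = w * x := by rw [hy]; group
          have hℓyw : cs.length (y * w) = cs.length y + cs.length w :=
            length_mul_of_leftReduced cs h1 hxI
          have hℓwx : cs.length (w * x) = cs.length w + cs.length x :=
            length_mul_of_rightReduced cs h2 hxJ
          have hℓwx' : cs.length (w * x') = cs.length w + cs.length x' :=
            length_mul_of_rightReduced cs h2 hx'mem
          have hywsu : y * w * cs.simple u = w * x' := by
            rw [hyw, hxsplit, mul_assoc, mul_assoc, cs.simple_mul_simple_self, mul_one]
          -- get reduced words
          obtain ⟨γ, hγI, hγred, hγprod⟩ := exists_reduced_word_of_mem_WP cs hxI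
          obtain ⟨α, hαlen, hαw⟩ := cs.exists_reduced_word w
          replace hαlen : α.length = cs.length w := by rw [hαw]; exact hαlen.symm
          have hγlen : cs.length y = γ.length := by rw [hγprod]; exact hγred
          have hγαred : cs.IsReduced (γ ++ α) := by
            show cs.length (cs.wordProd (γ ++ α)) = (γ ++ α).length
            rw [cs.wordProd_append, ← hγprod, ← hαw, List.length_append, hαlen, hℓyw]
            omega
          have hγαprod : cs.wordProd (γ ++ α) = y * w := by
            rw [cs.wordProd_append, ← hγprod, ← hαw]
          have hdec : cs.length (cs.wordProd (γ ++ α) * cs.simple u)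
              < cs.length (cs.wordProd (γ ++ α)) := by
            rw [hγαprod, hywsu, hℓwx', hℓyw]
            have hyx : cs.length y + cs.length w = cs.length w + cs.length x := by
              rw [← hℓyw, hyw, hℓwx]
            omega
          obtain ⟨j, hj, hjeq⟩ := exchange cs hγαred hdec
          rw [hγαprod, hywsu] at hjeq
          rcases Nat.lt_or_ge j γ.length with hjγ | hjγ
          · -- deletion in the γ (W_I) part: u ∈ J₁
            rw [List.eraseIdx_append_of_lt_length hjγ, cs.wordProd_append, ← hαw] at hjeq
            set y₁ := cs.wordProd (γ.eraseIdx j) with hy₁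
            have hy₁mem : y₁ ∈ WP cs I :=
              wordProd_mem_WP cs fun i hi => hγI i ((List.eraseIdx_sublist γ j).subset hi)
            -- w * x' = y₁ * w, so w * s u * w⁻¹ = y⁻¹ * y₁
            have hconj : w * cs.simple u * w⁻¹ = y⁻¹ * y₁ := by
              have h3 : y * (w * cs.simple u * w⁻¹) = y₁ := by
                have : y * (w * cs.simple u * w⁻¹) = (y * w * cs.simple u) * w⁻¹ := by group
                rw [this, hywsu, hjeq]
                group
              rw [← h3]
              group
            have huI : w * cs.simple u * w⁻¹ ∈ WP cs I := by
              rw [hconj]; exact mul_mem (inv_mem hxI) hy₁mem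
            have huJ₁ : u ∈ J₁ := ⟨huJ, huI⟩
            -- x' also satisfies the hypotheses
            have hx'I : w * x' * w⁻¹ ∈ WP cs I := by
              have h10 : y * (w * cs.simple u * w⁻¹) = w * x' * w⁻¹ := by
                rw [hy, hxsplit]
                have h9 : w * (x' * cs.simple u) * w⁻¹ * (w * cs.simple u * w⁻¹)
                    = w * x' * (cs.simple u * cs.simple u) * w⁻¹ := by group
                rw [h9, cs.simple_mul_simple_self, mul_one]
              rw [← h10]
              exact mul_mem hxI huI
            have hx'J₁ : x' ∈ WP cs J₁ := ih x' hx'mem hx'I (by omega)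
            rw [hxsplit]
            exact mul_mem hx'J₁ (simple_mem_WP cs huJ₁)
          · -- deletion in the α part: contradicts that w is reduced-J
            exfalso
            rw [List.eraseIdx_append_of_length_le hjγ, cs.wordProd_append] at hjeq
            rw [← hγprod] at hjeq
            have hcancel : w * cs.simple u = cs.wordProd (α.eraseIdx (j - γ.length)) := by
              have step : y * (w * cs.simple u)
                  = y * cs.wordProd (α.eraseIdx (j - γ.length)) := by
                rw [← mul_assoc, hywsu]
                exact hjeq
              exact mul_left_cancel step
            have hlt : cs.length (w * cs.simple u) < cs.length w := by
              rw [hcancel]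
              have h1' := cs.length_wordProd_le (α.eraseIdx (j - γ.length))
              have h2' : j - γ.length < α.length := by
                rw [List.length_append] at hj; omega
              have := List.length_eraseIdx_add_one h2'
              omega
            have := h2 u huJ
            omega
    exact key (cs.length x) x hxJ hxy le_rfl
  · -- easy direction
    rw [WP, Subgroup.closure_le]
    rintro _ ⟨u, ⟨huJ, huI⟩, rfl⟩
    refine ⟨simple_mem_WP cs huJ, ?_⟩
    refine ⟨w * cs.simple u * w⁻¹, huI, ?_⟩
    simp [MulAut.conj_apply]
    group

end DGM
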